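/- Let G be a minimal nonperfectly divisible fork-free graph, v ∈ V(G), and C = v_1v_2…v_nv_1 an odd hole contained in G[M(v)] (n ≥ 5 odd, indices modulo n). Then U'(C) is complete to U(C) ∪ V(C) ∪ Y'(C) ∪ Z(C). -/
import Mathlib


open SimpleGraph

/-- `G` contains an induced copy of `H`. -/
def HasInducedCopy {V W : Type*} (G : SimpleGraph V) (H : SimpleGraph W) : Prop :=
  ∃ f : W ↪ V, ∀ a b : W, G.Adj (f a) (f b) ↔ H.Adj a b

/-- The fork: the claw `K_{1,3}` with one edge subdivided once. -/
def fork : SimpleGraph (Fin 5) :=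
  SimpleGraph.fromEdgeSet {s(0, 1), s(0, 2), s(0, 3), s(3, 4)}

/-- The claw `K_{1,3}`. -/
def claw : SimpleGraph (Fin 4) :=
  SimpleGraph.fromEdgeSet {s(0, 1), s(0, 2), s(0, 3)}

/-- The path on 7 vertices. -/
def P7 : SimpleGraph (Fin 7) := SimpleGraph.pathGraph 7

/-- The disjoint union of a path on 6 vertices and a single vertex. -/
def P6K1 : SimpleGraph (Fin 7) :=
  SimpleGraph.fromEdgeSet {s(0, 1), s(1, 2), s(2, 3), s(3, 4), s(4, 5)}

/-- A graph is perfect if every induced subgraph has chromatic number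
equal to clique number. -/
def IsPerfect {V : Type*} (G : SimpleGraph V) : Prop :=
  ∀ s : Set V, (G.induce s).chromaticNumber = ((G.induce s).cliqueNum : ℕ∞)

/-- A graph is perfectly divisible if the vertex set of every (nonempty) induced
subgraph `H` can be partitioned into `A` and `B` with `H[A]` perfect and
`ω(H[B]) < ω(H)`. -/
def PerfectlyDivisible {V : Type*} (G : SimpleGraph V) : Prop :=
  ∀ s : Set V, s.Nonempty → ∃ A B : Set V, A ∪ B = s ∧ A ∩ B = ∅ ∧
    IsPerfect (G.induce A) ∧ (G.induce B).cliqueNum < (G.induce s).cliqueNum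

/-- A graph is minimal nonperfectly divisible if it is not perfectly divisible but
every proper induced subgraph is perfectly divisible. -/
def MinimalNPD {V : Type*} (G : SimpleGraph V) : Prop :=
  ¬ PerfectlyDivisible G ∧ ∀ s : Set V, s ≠ Set.univ → PerfectlyDivisible (G.induce s)

/-- The open neighborhood of a set `S`: all vertices outside `S` with a neighbor in `S`. -/
def NSet {V : Type*} (G : SimpleGraph V) (S : Set V) : Set V :=
  {v | v ∉ S ∧ ∃ x ∈ S, G.Adj x v}

/-- `M(S)`: the vertices outside `S ∪ N(S)`. -/
def MSet {V : Type*} (G : SimpleGraph V) (S : Set V) : Set V :=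
  {v | v ∉ S ∧ v ∉ NSet G S}

/-- `M(v)`: the set of vertices distinct from `v` and nonadjacent to `v`. -/
def Mv {V : Type*} (G : SimpleGraph V) (v : V) : Set V :=
  {u | u ≠ v ∧ ¬ G.Adj v u}

/-- `f : ZMod n → V` describes a hole (an induced cycle of length at least 4) of `G`. -/
def IsHole {V : Type*} (G : SimpleGraph V) (n : ℕ) (f : ZMod n → V) : Prop :=
  4 ≤ n ∧ Function.Injective f ∧
    ∀ i j : ZMod n, G.Adj (f i) (f j) ↔ (j = i + 1 ∨ i = j + 1)

/-- `U(C)`: the balloon centers of the hole `C` given by `f`. -/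
def USet {V : Type*} (G : SimpleGraph V) (n : ℕ) (f : ZMod n → V) : Set V :=
  {u | u ∈ NSet G (MSet G (Set.range f)) ∧
    ∃ i : ZMod n, G.neighborSet u ∩ Set.range f = {f i, f (i + 1)}}

/-- `U_i(C)`: the balloon centers of `C` attached at `v_i v_{i+1}`. -/
def UiSet {V : Type*} (G : SimpleGraph V) (n : ℕ) (f : ZMod n → V) (i : ZMod n) : Set V :=
  {u | u ∈ NSet G (MSet G (Set.range f)) ∧
    G.neighborSet u ∩ Set.range f = {f i, f (i + 1)}}

/-- `U'(C)`: the parachute centers of `C`. -/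
def U'Set {V : Type*} (G : SimpleGraph V) (n : ℕ) (f : ZMod n → V) : Set V :=
  {u | u ∈ NSet G (MSet G (Set.range f)) ∧ ∀ i : ZMod n, G.Adj u (f i)}

/-- `Z(C)`: vertices of `N(V(C)) \ N(M(C))` not complete to `V(C)`. -/
def ZSet {V : Type*} (G : SimpleGraph V) (n : ℕ) (f : ZMod n → V) : Set V :=
  {z | z ∈ NSet G (Set.range f) ∧ z ∉ NSet G (MSet G (Set.range f)) ∧
    ¬ ∀ i : ZMod n, G.Adj z (f i)}

/-- `Z'(C) = N(V(C)) \ (N(M(C)) ∪ Z(C))`. -/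
def Z'Set {V : Type*} (G : SimpleGraph V) (n : ℕ) (f : ZMod n → V) : Set V :=
  NSet G (Set.range f) \ (NSet G (MSet G (Set.range f)) ∪ ZSet G n f)

/-- `Y(C) = N_{M(C)}(U(C))`. -/
def YSet {V : Type*} (G : SimpleGraph V) (n : ℕ) (f : ZMod n → V) : Set V :=
  {y | y ∈ MSet G (Set.range f) ∧ ∃ u ∈ USet G n f, G.Adj u y}

/-- `x` and `y` lie in a common connected component of `G[S]`. -/
def SameComp {V : Type*} (G : SimpleGraph V) (S : Set V) (x y : V) : Prop :=
  ∃ (hx : x ∈ S) (hy : y ∈ S), (G.induce S).Reachable ⟨x, hx⟩ ⟨y, hy⟩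

/-- `Y'(C)`: the union of the components of `G[M(C)]` meeting `Y(C)`. -/
def Y'Set {V : Type*} (G : SimpleGraph V) (n : ℕ) (f : ZMod n → V) : Set V :=
  {x | ∃ y ∈ YSet G n f, SameComp G (MSet G (Set.range f)) x y}

lemma noFork {V : Type*} {G : SimpleGraph V} (hfork : ¬ HasInducedCopy G fork)
    {a b c d e : V}
    (hab : G.Adj a b) (hac : G.Adj a c) (had : G.Adj a d) (hde : G.Adj d e)
    (hbc : ¬ G.Adj b c) (hbd : ¬ G.Adj b d) (hcd : ¬ G.Adj c d)
    (hae : ¬ G.Adj a e) (hbe : ¬ G.Adj b e) (hce : ¬ G.Adj c e)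
    (hbc' : b ≠ c) (hae' : a ≠ e) : False := by
  have hbd' : b ≠ d := fun h => hbe (h ▸ hde)
  have hcd' : c ≠ d := fun h => hce (h ▸ hde)
  have hbe' : b ≠ e := fun h => hae (h ▸ hab)
  have hce' : c ≠ e := fun h => hae (h ▸ hac)
  apply hfork
  refine ⟨⟨![a,b,c,d,e], ?_⟩, ?_⟩
  · intro x y h
    fin_cases x <;> fin_cases y <;> simp_all <;>
      first
      | rfl
      | exact absurd h.symm (G.ne_of_adj (by assumption))
      | exact absurd h (G.ne_of_adj (by assumption))
      | exact absurd h (by assumption)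
      | exact absurd h.symm (by assumption)
  · intro x y
    fin_cases x <;> fin_cases y <;>
      simp only [Matrix.cons_val_zero, Matrix.cons_val_one, Matrix.head_cons, fork,
        fromEdgeSet_adj, Set.mem_insert_iff, Set.mem_singleton_iff] <;>
      constructor <;> intro h <;>
      first
      | exact absurd h (G.irrefl)
      | (exact ⟨by decide, by decide⟩)
      | assumption
      | exact hab.symm
      | exact hac.symm
      | exact had.symm
      | exact hde.symm
      | (exfalso; revert h; decide)
      | (exfalso; first
          | exact hbc h | exact hbd h | exact hcd h | exact hae h | exact hbe h | exact hce h
          | exact hbc h.symm | exact hbd h.symm | exact hcd h.symm | exact hae h.symm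
          | exact hbe h.symm | exact hce h.symm)


theorem stmt17 {V : Type*} [Fintype V] (G : SimpleGraph V)
    (hfork : ¬ HasInducedCopy G fork) (hmin : MinimalNPD G)
    (v : V) (n : ℕ) (f : ZMod n → V) (hC : IsHole G n f) (hodd : Odd n)
    (hn : 5 ≤ n) (hMv : Set.range f ⊆ Mv G v) :
    ∀ u' ∈ U'Set G n f,
      ∀ x ∈ USet G n f ∪ Set.range f ∪ Y'Set G n f ∪ ZSet G n f,
        G.Adj u' x := by
  obtain ⟨hn4, finj, hadj⟩ := hC
  haveI : NeZero n := ⟨by omega⟩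
  have key : ∀ c : ℕ, 0 < c → c ≤ 4 → ((c : ZMod n)) ≠ 0 := by
    intro c hc1 hc2 h
    rw [ZMod.natCast_eq_zero_iff] at h
    have := Nat.le_of_dvd hc1 h
    omega
  have nadjC : ∀ j k : ZMod n, j ≠ k + 1 → k ≠ j + 1 → ¬ G.Adj (f k) (f j) := by
    intro j k h1 h2 h
    rcases (hadj k j).mp h with h | h
    exacts [h1 h, h2 h]
  have hM : ∀ m ∈ MSet G (Set.range f), (∀ i, ¬ G.Adj (f i) m) ∧ m ∉ Set.range f := by
    rintro m ⟨hmr, hmN⟩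
    refine ⟨fun i hi => hmN ⟨hmr, f i, Set.mem_range_self i, hi⟩, hmr⟩
  intro u' hu'
  obtain ⟨⟨hu'M, m', hm'M, hm'u'⟩, hu'C⟩ := hu'
  have hm'C : ∀ i, ¬ G.Adj (f i) m' := (hM m' hm'M).1
  have hm'r : m' ∉ Set.range f := (hM m' hm'M).2
  -- completeness to U(C)
  have hU : ∀ u ∈ USet G n f, G.Adj u' u := by
    rintro u ⟨⟨huM, y, hyM, hyu⟩, i, hNu⟩
    have hyC : ∀ j, ¬ G.Adj (f j) y := (hM y hyM).1
    have hui : G.Adj u (f i) := by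
      have h : f i ∈ G.neighborSet u ∩ Set.range f := hNu ▸ Set.mem_insert _ _
      exact h.1
    have hun : ∀ j, j ≠ i → j ≠ i + 1 → ¬ G.Adj u (f j) := by
      intro j h1 h2 hadj'
      have h : f j ∈ G.neighborSet u ∩ Set.range f := ⟨hadj', Set.mem_range_self j⟩
      rw [hNu] at h
      rcases h with h | h
      exacts [h1 (finj h), h2 (finj h)]
    by_contra hcon
    have huu' : u' ≠ u := by
      rintro rfl
      exact hun (i + 2) (fun h => key 2 (by norm_num) (by norm_num) (by push_cast; linear_combination h))
        (fun h => key 1 (by norm_num) (by norm_num) (by push_cast; linear_combination h)) (hu'C (i + 2))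
    have hbc : ¬ G.Adj (f (i + 2)) (f (i - 1)) :=
      nadjC (i - 1) (i + 2)
        (fun h => key 4 (by norm_num) le_rfl (by push_cast; linear_combination -h))
        (fun h => key 2 (by norm_num) (by norm_num) (by push_cast; linear_combination h))
    have hbcne : f (i + 2) ≠ f (i - 1) := fun h =>
      key 3 (by norm_num) (by norm_num) (by push_cast; linear_combination (finj h))
    have hbeu : ¬ G.Adj (f (i + 2)) u := fun h =>
      hun (i + 2) (fun h => key 2 (by norm_num) (by norm_num) (by push_cast; linear_combination h))
        (fun h => key 1 (by norm_num) (by norm_num) (by push_cast; linear_combination h)) h.symm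
    have hceu : ¬ G.Adj (f (i - 1)) u := fun h =>
      hun (i - 1) (fun h => key 1 (by norm_num) (by norm_num) (by push_cast; linear_combination -h))
        (fun h => key 2 (by norm_num) (by norm_num) (by push_cast; linear_combination -h)) h.symm
    by_cases h1 : G.Adj u' y
    · exact noFork hfork (hu'C (i + 2)) (hu'C (i - 1)) h1 hyu hbc
        (hyC (i + 2)) (hyC (i - 1))
        hcon hbeu hceu hbcne huu'
    · by_cases h2 : G.Adj m' u
      · have hm'y : m' ≠ y := by rintro rfl; exact h1 hm'u'.symm
        by_cases h3 : G.Adj y m'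
        · exact noFork hfork (hu'C (i + 2)) (hu'C (i - 1)) hm'u'.symm h3.symm hbc
            (hm'C (i + 2)) (hm'C (i - 1))
            h1 (hyC (i + 2)) (hyC (i - 1))
            hbcne (fun h => hu'M (h.symm ▸ hyM))
        · -- fork (u; y, m'; f i, f (i-1))
          have hdei : G.Adj (f i) (f (i - 1)) := (hadj i (i - 1)).mpr (Or.inr (by ring))
          have haei : ¬ G.Adj u (f (i - 1)) :=
            hun (i - 1) (fun h => key 1 (by norm_num) (by norm_num) (by push_cast; linear_combination -h))
              (fun h => key 2 (by norm_num) (by norm_num) (by push_cast; linear_combination -h))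
          have hane : u ≠ f (i - 1) := fun h => hyC (i - 1) (h ▸ hyu).symm
          exact noFork hfork hyu.symm h2.symm hui hdei h3
            (fun h => hyC i h.symm) (fun h => hm'C i h.symm)
            haei (fun h => hyC (i - 1) h.symm) (fun h => hm'C (i - 1) h.symm)
            (Ne.symm hm'y) hane
      · -- fork (u'; m', f (i+2); f i, u)
        have hcd : ¬ G.Adj (f (i + 2)) (f i) :=
          nadjC i (i + 2)
            (fun h => key 3 (by norm_num) (by norm_num) (by push_cast; linear_combination -h))
            (fun h => key 1 (by norm_num) (by norm_num) (by push_cast; linear_combination h))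
        exact noFork hfork hm'u'.symm (hu'C (i + 2)) (hu'C i) hui.symm
          (fun h => hm'C (i + 2) h.symm) (fun h => hm'C i h.symm) hcd
          hcon h2 hbeu (fun h => hm'r ⟨i + 2, h.symm⟩) huu'
  intro x hx
  rcases hx with ((hxU | hxC) | hxY) | hxZ
  · exact hU x hxU
  · obtain ⟨i, rfl⟩ := hxC
    exact hu'C i
  · -- Y'(C)
    obtain ⟨y, ⟨hyM, u, huU, huy⟩, hxM, hyM2, hreach⟩ := hxY
    have hyC : ∀ j, ¬ G.Adj (f j) y := (hM y hyM).1
    have h1 : G.Adj u' u := hU u huU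
    obtain ⟨⟨huM, w0, hw0M, hw0u⟩, i, hNu⟩ := huU
    have hun : ∀ j, j ≠ i → j ≠ i + 1 → ¬ G.Adj u (f j) := by
      intro j hj1 hj2 hadj'
      have h : f j ∈ G.neighborSet u ∩ Set.range f := ⟨hadj', Set.mem_range_self j⟩
      rw [hNu] at h
      rcases h with h | h
      exacts [hj1 (finj h), hj2 (finj h)]
    have h2 : G.Adj u' y := by
      by_contra hcon
      have hbc : ¬ G.Adj (f (i + 2)) (f (i - 1)) :=
        nadjC (i - 1) (i + 2)
          (fun h => key 4 (by norm_num) le_rfl (by push_cast; linear_combination -h))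
          (fun h => key 2 (by norm_num) (by norm_num) (by push_cast; linear_combination h))
      have hbcne : f (i + 2) ≠ f (i - 1) := fun h =>
        key 3 (by norm_num) (by norm_num) (by push_cast; linear_combination (finj h))
      exact noFork hfork (hu'C (i + 2)) (hu'C (i - 1)) h1 huy hbc
        (fun h => hun (i + 2)
          (fun h => key 2 (by norm_num) (by norm_num) (by push_cast; linear_combination h))
          (fun h => key 1 (by norm_num) (by norm_num) (by push_cast; linear_combination h)) h.symm)
        (fun h => hun (i - 1)
          (fun h => key 1 (by norm_num) (by norm_num) (by push_cast; linear_combination -h))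
          (fun h => key 2 (by norm_num) (by norm_num) (by push_cast; linear_combination -h)) h.symm)
        hcon (hyC (i + 2)) (hyC (i - 1))
        hbcne (fun h => hu'M (h.symm ▸ hyM))
    have step : ∀ (a b : ↥(MSet G (Set.range f))),
        (G.induce (MSet G (Set.range f))).Walk a b → G.Adj u' (a : V) → G.Adj u' (b : V) := by
      intro a b p
      induction p with
      | nil => exact id
      | @cons a c b hac p ih =>
        intro ha
        apply ih
        by_contra hcon
        have hGac : G.Adj (a : V) (c : V) := hac
        have hbc : ¬ G.Adj (f 0) (f 2) :=
          nadjC 2 0 (fun h => key 1 (by norm_num) (by norm_num) (by push_cast; linear_combination h))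
            (fun h => key 3 (by norm_num) (by norm_num) (by push_cast; linear_combination -h))
        exact noFork hfork (hu'C 0) (hu'C 2) ha hGac hbc
          (fun h => (hM _ a.2).1 0 h) (fun h => (hM _ a.2).1 2 h)
          hcon (fun h => (hM _ c.2).1 0 h) (fun h => (hM _ c.2).1 2 h)
          (fun h => key 2 (by norm_num) (by norm_num) (by push_cast; linear_combination -(finj h)))
          (fun h => (h ▸ hu'M) c.2)
    obtain ⟨p⟩ := hreach.symm
    exact step _ _ p h2
  · -- Z(C)
    obtain ⟨⟨hzr, hzN⟩, hzNM, hznc⟩ := hxZ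
    obtain ⟨xx, ⟨a0, rfl⟩, ha0z⟩ := hzN
    push_neg at hznc
    obtain ⟨b0, hb0⟩ := hznc
    have hzM : ∀ m ∈ MSet G (Set.range f), ¬ G.Adj m x := by
      intro m hm hadj'
      exact hzNM ⟨fun hmem => hmem.2 ⟨hzr, f a0, Set.mem_range_self a0, ha0z⟩, m, hm, hadj'⟩
    by_contra hcon
    have hzu' : u' ≠ x := fun h => hzM m' hm'M (h ▸ hm'u')
    obtain ⟨a, c, hza, hzc, h1, h2⟩ : ∃ a c : ZMod n,
        G.Adj (f a) x ∧ ¬ G.Adj x (f c) ∧ a ≠ c + 1 ∧ c ≠ a + 1 := by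
      by_contra hsel
      push_neg at hsel
      have hsel' : ∀ a c : ZMod n, G.Adj (f a) x → ¬ G.Adj x (f c) → a = c + 1 ∨ c = a + 1 := by
        intro a c h1 h2
        by_cases hac : a = c + 1
        · exact Or.inl hac
        · exact Or.inr (hsel a c h1 h2 hac)
      rcases hsel' a0 b0 ha0z hb0 with h | h
      · -- a0 = b0 + 1
        have hb2 : ¬ G.Adj x (f (b0 - 2)) := by
          intro hb2
          rcases hsel' (b0 - 2) b0 hb2.symm hb0 with hh | hh
          · exact key 3 (by norm_num) (by norm_num) (by push_cast; linear_combination -hh)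
          · exact key 1 (by norm_num) (by norm_num) (by push_cast; linear_combination hh)
        rcases hsel' a0 (b0 - 2) ha0z hb2 with hh | hh
        · exact key 2 (by norm_num) (by norm_num) (by push_cast; linear_combination hh - h)
        · exact key 4 (by norm_num) le_rfl (by push_cast; linear_combination -h - hh)
      · -- b0 = a0 + 1
        have hb2 : ¬ G.Adj x (f (b0 + 2)) := by
          intro hb2
          rcases hsel' (b0 + 2) b0 hb2.symm hb0 with hh | hh
          · exact key 1 (by norm_num) (by norm_num) (by push_cast; linear_combination hh)
          · exact key 3 (by norm_num) (by norm_num) (by push_cast; linear_combination -hh)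
        rcases hsel' a0 (b0 + 2) ha0z hb2 with hh | hh
        · exact key 4 (by norm_num) le_rfl (by push_cast; linear_combination -hh - h)
        · exact key 2 (by norm_num) (by norm_num) (by push_cast; linear_combination hh - h)
    have hcd : ¬ G.Adj (f c) (f a) := nadjC a c h1 h2
    exact noFork hfork hm'u'.symm (hu'C c) (hu'C a) hza
      (fun h => hm'C c h.symm) (fun h => hm'C a h.symm) hcd
      hcon (hzM m' hm'M) (fun h => hzc h.symm)
      (fun h => hm'r ⟨c, h.symm⟩) hzu'
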